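/- Let $Z_0, Z_1, \dots$ be i.i.d. standard normal variables, $\lambda, \sigma, h > 0$ with $2\lambda > \sigma^2$ and $0 < h < (2\lambda - \sigma^2)/\lambda^2$, and set $m := 2\lambda - \lambda^2 h - \sigma^2 > 0$. For the recursion $D_{n+1} = (1 - \lambda h + \sigma \sqrt{h} Z_n) D_n$ with $D_0$ square-integrable and independent of $(Z_n)$, one has $\mathbb{E}|D_n|^2 = (1 - hm)^n \mathbb{E}|D_0|^2 \le e^{-mnh} \mathbb{E}|D_0|^2$. -/

import Mathlib

open MeasureTheory ProbabilityTheory Real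
open scoped ENNReal NNReal

lemma aux_M0 : ∫ x : ℝ, Real.exp (-(1/2) * x ^ 2) = Real.sqrt (2 * π) := by
  rw [integral_gaussian]
  rw [show π / (1/2) = 2 * π by ring]

lemma aux_M1 : ∫ x : ℝ, x * Real.exp (-(1/2) * x ^ 2) = 0 := by
  have h := MeasureTheory.integral_neg_eq_self (fun x : ℝ => x * Real.exp (-(1/2) * x ^ 2)) volume
  have h2 : ∀ x : ℝ, (-x) * Real.exp (-(1/2) * (-x) ^ 2) = -(x * Real.exp (-(1/2) * x ^ 2)) := by
    intro x; rw [neg_sq]; ring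
  simp only [h2, integral_neg] at h
  linarith

lemma aux_I0 : Integrable (fun x : ℝ => Real.exp (-(1/2) * x ^ 2)) :=
  integrable_exp_neg_mul_sq (by norm_num)

lemma aux_I1 : Integrable (fun x : ℝ => x * Real.exp (-(1/2) * x ^ 2)) :=
  integrable_mul_exp_neg_mul_sq (by norm_num)

lemma aux_I2 : Integrable (fun x : ℝ => x ^ 2 * Real.exp (-(1/2) * x ^ 2)) := by
  have := integrable_rpow_mul_exp_neg_mul_sq (b := 1/2) (by norm_num) (s := 2) (by norm_num)
  simpa [show ∀ x : ℝ, x ^ (2:ℝ) = x ^ 2 from fun x => by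
    rw [show (2:ℝ) = ((2:ℕ):ℝ) by norm_num, Real.rpow_natCast]] using this

lemma aux_M2 : ∫ x : ℝ, x ^ 2 * Real.exp (-(1/2) * x ^ 2) = Real.sqrt (2 * π) := by
  have hsplit := intervalIntegral.integral_Iic_add_Ioi (b := (0:ℝ))
    aux_I2.integrableOn aux_I2.integrableOn
  have hneg : ∫ x in Set.Iic (0:ℝ), x ^ 2 * Real.exp (-(1/2) * x ^ 2)
      = ∫ x in Set.Ioi (0:ℝ), x ^ 2 * Real.exp (-(1/2) * x ^ 2) := by
    have h := integral_comp_neg_Ioi (c := (0:ℝ))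
      (f := fun x : ℝ => x ^ 2 * Real.exp (-(1/2) * x ^ 2))
    simp only [neg_sq, neg_zero] at h
    exact h.symm
  have hIoi : ∫ x in Set.Ioi (0:ℝ), x ^ 2 * Real.exp (-(1/2) * x ^ 2)
      = (1/2:ℝ) ^ (-(3:ℝ)/2) * (1/2) * Real.Gamma (3/2) := by
    have h2 : ∀ x : ℝ, x ^ (2:ℝ) * Real.exp (-(1/2) * x ^ (2:ℝ)) = x ^ 2 * Real.exp (-(1/2) * x ^ 2) := by
      intro x; rw [show (2:ℝ) = ((2:ℕ):ℝ) by norm_num, Real.rpow_natCast]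
    have := integral_rpow_mul_exp_neg_mul_rpow (p := 2) (q := 2) (b := 1/2)
      (by norm_num) (by norm_num) (by norm_num)
    simp only [h2] at this
    rw [this]; norm_num
  have hGamma : Real.Gamma (3/2) = Real.sqrt π / 2 := by
    rw [show (3/2 : ℝ) = 1/2 + 1 by norm_num, Real.Gamma_add_one (by norm_num),
      Real.Gamma_one_half_eq]; ring
  have hpow : (1/2:ℝ) ^ (-(3:ℝ)/2) = 2 * Real.sqrt 2 := by
    rw [one_div, ← Real.rpow_neg_one (2:ℝ),
      ← Real.rpow_mul (by norm_num : (0:ℝ) ≤ 2),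
      show (-1 : ℝ) * (-(3:ℝ)/2) = 1 + 1/2 by norm_num,
      Real.rpow_add (by norm_num), Real.rpow_one, ← Real.sqrt_eq_rpow]
  rw [← hsplit, hneg, hIoi, hGamma, hpow, ← two_mul,
    Real.sqrt_mul (by norm_num : (0:ℝ) ≤ 2)]
  ring

lemma aux_gauss_moment (a b : ℝ) :
    ∫ x, (a + b * x) ^ 2 ∂(gaussianReal 0 1) = a ^ 2 + b ^ 2 := by
  rw [gaussianReal_of_var_ne_zero _ one_ne_zero]
  have hpdf : (gaussianPDF 0 1) = fun x =>
      ((Real.toNNReal ((Real.sqrt (2*π))⁻¹ * Real.exp (-(1/2) * x ^ 2)) : ℝ≥0) : ℝ≥0∞) := by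
    funext x
    rw [gaussianPDF, gaussianPDFReal, ENNReal.ofReal]
    norm_num
    congr 2
    ring
  rw [hpdf, integral_withDensity_eq_integral_smul (by fun_prop)]
  have hnn : ∀ x : ℝ, (0:ℝ) ≤ (Real.sqrt (2*π))⁻¹ * Real.exp (-(1/2) * x ^ 2) := by
    intro x; positivity
  have heq : ∀ x : ℝ,
      (Real.toNNReal ((Real.sqrt (2*π))⁻¹ * Real.exp (-(1/2) * x ^ 2))) • ((a + b * x) ^ 2)
      = (Real.sqrt (2*π))⁻¹ * (a ^ 2 * Real.exp (-(1/2) * x ^ 2)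
          + (2*a*b) * (x * Real.exp (-(1/2) * x ^ 2))
          + b ^ 2 * (x ^ 2 * Real.exp (-(1/2) * x ^ 2))) := by
    intro x
    rw [NNReal.smul_def, Real.coe_toNNReal _ (hnn x), smul_eq_mul]
    ring
  simp only [heq]
  rw [integral_const_mul]
  have h3 : ∫ x : ℝ, (a ^ 2 * Real.exp (-(1/2) * x ^ 2)
      + (2*a*b) * (x * Real.exp (-(1/2) * x ^ 2))
      + b ^ 2 * (x ^ 2 * Real.exp (-(1/2) * x ^ 2)))
      = a ^ 2 * Real.sqrt (2*π) + (2*a*b) * 0 + b ^ 2 * Real.sqrt (2*π) := by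
    rw [integral_add (f := fun x : ℝ => a ^ 2 * Real.exp (-(1/2) * x ^ 2)
        + (2*a*b) * (x * Real.exp (-(1/2) * x ^ 2)))
      (by exact (aux_I0.const_mul _).add (aux_I1.const_mul _)) (aux_I2.const_mul _),
      integral_add (aux_I0.const_mul _) (aux_I1.const_mul _),
      integral_const_mul, integral_const_mul, integral_const_mul, aux_M0, aux_M1, aux_M2]
  rw [h3]
  have hne : Real.sqrt (2*π) ≠ 0 := by positivity
  field_simp
  ring

theorem stmt_10 {Ω : Type*} [MeasurableSpace Ω] (P : Measure Ω)
    [IsProbabilityMeasure P]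
    (lam sigma h : ℝ) (hlam : 0 < lam) (hsigma : 0 < sigma) (hh : 0 < h)
    (hcond : sigma ^ 2 < 2 * lam) (hh' : h < (2 * lam - sigma ^ 2) / lam ^ 2)
    (m : ℝ) (hm : m = 2 * lam - lam ^ 2 * h - sigma ^ 2)
    (Z : ℕ → Ω → ℝ) (hZmeas : ∀ n, Measurable (Z n))
    (hZlaw : ∀ n, Measure.map (Z n) P = gaussianReal 0 1)
    (hZindep : iIndepFun Z P)
    (D : ℕ → Ω → ℝ)
    (hD0meas : Measurable (D 0))
    (hD0sq : Integrable (fun ω => (D 0 ω) ^ 2) P)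
    (hindep : IndepFun (D 0) (fun ω n => Z n ω) P)
    (hrec : ∀ n ω,
      D (n + 1) ω = (1 - lam * h + sigma * Real.sqrt h * Z n ω) * D n ω) :
    ∀ n : ℕ,
      ∫ ω, (D n ω) ^ 2 ∂P = (1 - h * m) ^ n * ∫ ω, (D 0 ω) ^ 2 ∂P ∧
      ∫ ω, (D n ω) ^ 2 ∂P ≤ Real.exp (-(m * n * h)) * ∫ ω, (D 0 ω) ^ 2 ∂P := by
  -- abbreviations
  set a : ℝ := 1 - lam * h with ha
  set b : ℝ := sigma * Real.sqrt h with hb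
  have hb2 : b ^ 2 = sigma ^ 2 * h := by
    rw [hb, mul_pow, Real.sq_sqrt hh.le]
  have hc : a ^ 2 + b ^ 2 = 1 - h * m := by rw [hm, ha, hb2]; ring
  have hc0 : (0:ℝ) ≤ 1 - h * m := by rw [← hc]; positivity
  -- explicit formula for D n
  have hDn : ∀ n ω, D n ω = D 0 ω * ∏ k ∈ Finset.range n, (a + b * Z k ω) := by
    intro n
    induction n with
    | zero => intro ω; simp
    | succ n ih =>
      intro ω
      rw [hrec n ω, Finset.prod_range_succ, ih ω]
      ring
  -- single-step expectation
  have hsingle : ∀ N, ∫ ω, (a + b * Z N ω) ^ 2 ∂P = 1 - h * m := by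
    intro N
    have := integral_map (μ := P) (φ := Z N) (hZmeas N).aemeasurable
      (f := fun x => (a + b * x) ^ 2)
      (by exact ((measurable_const.add (measurable_const.mul measurable_id)).pow_const
        2).aestronglyMeasurable)
    rw [hZlaw N] at this
    rw [← this, aux_gauss_moment, hc]
  -- independence of partial product and next factor
  have hindepN : ∀ N : ℕ,
      IndepFun (fun ω => ∏ k ∈ Finset.range N, (a + b * Z k ω) ^ 2)
        (fun ω => (a + b * Z N ω) ^ 2) P := by
    intro N
    have h1 := hZindep.indepFun_finset (Finset.range N) {N}
      (by simp [Finset.disjoint_singleton_right]) hZmeas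
    have hφ : Measurable (fun v : (i : (Finset.range N : Finset ℕ)) → ℝ =>
        ∏ i ∈ (Finset.range N).attach, (a + b * v i) ^ 2) :=
      Finset.measurable_prod _ fun i _ =>
        ((measurable_const.add (measurable_const.mul (measurable_pi_apply i))).pow_const 2)
    have hψ : Measurable (fun v : (i : ({N} : Finset ℕ)) → ℝ =>
        (a + b * v ⟨N, Finset.mem_singleton_self N⟩) ^ 2) :=
      (measurable_const.add (measurable_const.mul (measurable_pi_apply _))).pow_const 2
    have h2 := h1.comp hφ hψ
    have e1 : (fun v : (i : (Finset.range N : Finset ℕ)) → ℝ =>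
          ∏ i ∈ (Finset.range N).attach, (a + b * v i) ^ 2) ∘
        (fun ω (i : (Finset.range N : Finset ℕ)) => Z i ω)
        = fun ω => ∏ k ∈ Finset.range N, (a + b * Z k ω) ^ 2 := by
      funext ω
      simp only [Function.comp_apply]
      rw [← Finset.prod_attach (Finset.range N) (fun k => (a + b * Z k ω) ^ 2)]
    have e2 : (fun v : (i : ({N} : Finset ℕ)) → ℝ =>
          (a + b * v ⟨N, Finset.mem_singleton_self N⟩) ^ 2) ∘
        (fun ω (i : ({N} : Finset ℕ)) => Z i ω)
        = fun ω => (a + b * Z N ω) ^ 2 := rfl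
    rwa [e1, e2] at h2
  have hprodmeas : ∀ N : ℕ,
      Measurable (fun ω => ∏ k ∈ Finset.range N, (a + b * Z k ω) ^ 2) := fun N =>
    Finset.measurable_prod _ fun k _ =>
      ((measurable_const.add (measurable_const.mul (hZmeas k))).pow_const 2)
  -- expectation of the product
  have hprod : ∀ N : ℕ,
      ∫ ω, ∏ k ∈ Finset.range N, (a + b * Z k ω) ^ 2 ∂P = (1 - h * m) ^ N := by
    intro N
    induction N with
    | zero => simp
    | succ N ih =>
      have hmul := (hindepN N).integral_mul_eq_mul_integral
        (hprodmeas N).aestronglyMeasurable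
        ((measurable_const.add (measurable_const.mul (hZmeas N))).pow_const 2).aestronglyMeasurable
      have : (fun ω => ∏ k ∈ Finset.range (N+1), (a + b * Z k ω) ^ 2)
          = (fun ω => ∏ k ∈ Finset.range N, (a + b * Z k ω) ^ 2)
            * (fun ω => (a + b * Z N ω) ^ 2) := by
        funext ω
        simp [Finset.prod_range_succ]
      rw [this, hmul, ih, hsingle N, pow_succ]
  -- key formula
  have key : ∀ N : ℕ, ∫ ω, (D N ω) ^ 2 ∂P
      = (∫ ω, (D 0 ω) ^ 2 ∂P) * (1 - h * m) ^ N := by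
    intro N
    have hg : Measurable (fun y : ℕ → ℝ => ∏ k ∈ Finset.range N, (a + b * y k) ^ 2) :=
      Finset.measurable_prod _ fun k _ =>
        ((measurable_const.add (measurable_const.mul (measurable_pi_apply k))).pow_const 2)
    have hindep2 : IndepFun (fun ω => (D 0 ω) ^ 2)
        (fun ω => ∏ k ∈ Finset.range N, (a + b * Z k ω) ^ 2) P := by
      have := hindep.comp (φ := fun x : ℝ => x ^ 2)
        (ψ := fun y : ℕ → ℝ => ∏ k ∈ Finset.range N, (a + b * y k) ^ 2)
        (measurable_id.pow_const 2) hg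
      exact this
    have hmul := hindep2.integral_mul_eq_mul_integral
      (hD0meas.pow_const 2).aestronglyMeasurable
      (hprodmeas N).aestronglyMeasurable
    have hfun : (fun ω => (D N ω) ^ 2)
        = (fun ω => (D 0 ω) ^ 2) * (fun ω => ∏ k ∈ Finset.range N, (a + b * Z k ω) ^ 2) := by
      funext ω
      simp only [Pi.mul_apply]
      rw [hDn N ω, mul_pow, ← Finset.prod_pow]
    rw [hfun, hmul, hprod N]
  -- conclusion
  intro n
  refine ⟨by rw [key n, mul_comm], ?_⟩
  rw [key n, mul_comm]
  have hD0nn : (0:ℝ) ≤ ∫ ω, (D 0 ω) ^ 2 ∂P := integral_nonneg fun ω => sq_nonneg _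
  refine mul_le_mul_of_nonneg_right ?_ hD0nn
  have h1 : (1 - h * m) ≤ Real.exp (-(h * m)) := by
    have := Real.add_one_le_exp (-(h * m))
    linarith
  calc (1 - h * m) ^ n ≤ (Real.exp (-(h * m))) ^ n := pow_le_pow_left₀ hc0 h1 n
    _ = Real.exp (-(m * n * h)) := by
      rw [← Real.exp_nat_mul]
      congr 1
      ring
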